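/- For all integers q ≥ 1 and N ≥ 0, the sum Σ_{l=0}^{N} C(N, l) · C(2q + N − l, q + l) is even. -/

import Mathlib

open Finset

/-- `U m k N = Σ_l C(N,l) C(m+N-l, k+l)` in `ZMod 2`. -/
private def Ufun (m k N : ℕ) : ZMod 2 :=
  ∑ l ∈ range (N + 1), ((N.choose l * (m + N - l).choose (k + l) : ℕ) : ZMod 2)

/-- `V m k N = Σ_j C(N,j) C(m+2j, k+j)` in `ZMod 2`. -/
private def Vfun (m k N : ℕ) : ZMod 2 :=
  ∑ j ∈ range (N + 1), ((N.choose j * (m + 2 * j).choose (k + j) : ℕ) : ZMod 2)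

private lemma Ufun_succ (m k N : ℕ) :
    Ufun m k (N + 1) = Ufun (m + 1) k N + Ufun m (k + 1) N := by
  have h := Finset.sum_choose_succ_mul
    (R := ZMod 2) (fun i _ => ((m + N + 1 - i).choose (k + i) : ZMod 2)) N
  have e1 : Ufun m k (N + 1)
      = ∑ i ∈ range (N + 2), ((N + 1).choose i : ZMod 2) * ((m + N + 1 - i).choose (k + i) : ZMod 2) := by
    unfold Ufun
    refine Finset.sum_congr rfl fun i _ => ?_
    rw [Nat.cast_mul, show m + (N + 1) - i = m + N + 1 - i from by omega]
  have e2 : (∑ i ∈ range (N + 1), (N.choose i : ZMod 2) * ((m + N + 1 - i).choose (k + i) : ZMod 2))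
      = Ufun (m + 1) k N := by
    unfold Ufun
    refine Finset.sum_congr rfl fun i _ => ?_
    rw [Nat.cast_mul, show m + 1 + N - i = m + N + 1 - i from by omega]
  have e3 : (∑ i ∈ range (N + 1), (N.choose i : ZMod 2) * ((m + N + 1 - (i + 1)).choose (k + (i + 1)) : ZMod 2))
      = Ufun m (k + 1) N := by
    unfold Ufun
    refine Finset.sum_congr rfl fun i _ => ?_
    rw [Nat.cast_mul, show m + N - i = m + N + 1 - (i + 1) from by omega,
      show k + 1 + i = k + (i + 1) from by omega]
  rw [e1, h, e2, e3]

private lemma Vfun_succ (m k N : ℕ) :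
    Vfun m k (N + 1) = Vfun m k N + Vfun (m + 2) (k + 1) N := by
  have h := Finset.sum_choose_succ_mul
    (R := ZMod 2) (fun i _ => ((m + 2 * i).choose (k + i) : ZMod 2)) N
  have e1 : Vfun m k (N + 1)
      = ∑ i ∈ range (N + 2), ((N + 1).choose i : ZMod 2) * ((m + 2 * i).choose (k + i) : ZMod 2) := by
    unfold Vfun
    exact Finset.sum_congr rfl fun i _ => by rw [Nat.cast_mul]
  have e2 : (∑ i ∈ range (N + 1), (N.choose i : ZMod 2) * ((m + 2 * i).choose (k + i) : ZMod 2))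
      = Vfun m k N := by
    unfold Vfun
    exact Finset.sum_congr rfl fun i _ => by rw [Nat.cast_mul]
  have e3 : (∑ i ∈ range (N + 1), (N.choose i : ZMod 2) * ((m + 2 * (i + 1)).choose (k + (i + 1)) : ZMod 2))
      = Vfun (m + 2) (k + 1) N := by
    unfold Vfun
    refine Finset.sum_congr rfl fun i _ => ?_
    rw [Nat.cast_mul, show m + 2 + 2 * i = m + 2 * (i + 1) from by omega,
      show k + 1 + i = k + (i + 1) from by omega]
  rw [e1, h, e2, e3]

private lemma Vfun_pascal (m k N : ℕ) :
    Vfun (m + 1) (k + 1) N = Vfun m (k + 1) N + Vfun m k N := by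
  simp only [Vfun, ← Finset.sum_add_distrib]
  refine Finset.sum_congr rfl fun j hj => ?_
  have : (m + 1 + 2 * j).choose (k + 1 + j)
      = (m + 2 * j).choose (k + j) + (m + 2 * j).choose (k + 1 + j) := by
    have h1 : m + 1 + 2 * j = (m + 2 * j) + 1 := by omega
    have h2 : k + 1 + j = (k + j) + 1 := by omega
    rw [h1, h2, Nat.choose_succ_succ]
  rw [this]
  push_cast
  ring

private lemma Ufun_eq_Vfun (N m k : ℕ) : Ufun m k N = Vfun m k N := by
  induction N generalizing m k with
  | zero => simp [Ufun, Vfun]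
  | succ n ih =>
    rw [Ufun_succ, Vfun_succ, ih, ih, Vfun_pascal (m + 1) k n, Vfun_pascal m k n]
    have h : Vfun m k n + Vfun m k n = 0 := CharTwo.add_self_eq_zero _
    linear_combination -h

private lemma two_dvd_central (s : ℕ) (hs : 1 ≤ s) : 2 ∣ (2 * s).choose s := by
  obtain ⟨t, rfl⟩ := Nat.exists_eq_add_of_le hs
  rw [show 2 * (1 + t) = (2 * t + 1) + 1 from by omega,
    show 1 + t = t + 1 from by omega, Nat.choose_succ_succ]
  have h3 : (2 * t + 1).choose (t + 1) = (2 * t + 1).choose t := by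
    have := Nat.choose_symm (n := 2 * t + 1) (k := t + 1) (by omega)
    simpa [show 2 * t + 1 - (t + 1) = t from by omega] using this.symm
  rw [h3]
  omega

theorem sum_choose_mul_choose_even (q N : ℕ) (hq : 1 ≤ q) :
    2 ∣ ∑ l ∈ Finset.range (N + 1), N.choose l * (2 * q + N - l).choose (q + l) := by
  rw [← ZMod.natCast_eq_zero_iff]
  rw [Nat.cast_sum]
  have hU : (∑ l ∈ Finset.range (N + 1),
      ((N.choose l * (2 * q + N - l).choose (q + l) : ℕ) : ZMod 2)) = Ufun (2 * q) q N := rfl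
  rw [hU, Ufun_eq_Vfun]
  refine Finset.sum_eq_zero fun j hj => ?_
  rw [ZMod.natCast_eq_zero_iff]
  refine Dvd.dvd.mul_left ?_ _
  rw [show 2 * q + 2 * j = 2 * (q + j) from by omega]
  exact two_dvd_central _ (by omega)
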